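/- Let R be a commutative ring and let M be a free R-module with a basis (b_i)_{i∈ι}. Fix an index i₀ and let e denote the image of b_{i₀} under the canonical inclusion of M into the exterior algebra Λ(M). Then for every ω ∈ Λ(M), one has e∧ω = 0 if and only if there exists η ∈ Λ(M) with ω = e∧η; equivalently, the kernel of left exterior multiplication by e on Λ(M) equals its image. -/

import Mathlib

/-- Let `R` be a commutative ring and `M` a free `R`-module with basis
`(bᵢ)`. Let `e` be the image in the exterior algebra `Λ(M)` of a basis vector `b i₀`. Then for
every `ω ∈ Λ(M)`, `e ∧ ω = 0` iff `ω = e ∧ η` for some `η`; i.e. the kernel of left exterior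
multiplication by `e` equals its image. -/
theorem stmt12 (R : Type*) [CommRing R] (M : Type*) [AddCommGroup M] [Module R M]
    (ι : Type*) (b : Module.Basis ι R M) (i₀ : ι) (ω : ExteriorAlgebra R M) :
    ExteriorAlgebra.ι R (b i₀) * ω = 0 ↔
      ∃ η : ExteriorAlgebra R M, ω = ExteriorAlgebra.ι R (b i₀) * η := by
  constructor
  · intro h
    refine ⟨CliffordAlgebra.contractLeft (Q := (0 : QuadraticForm R M)) (b.coord i₀) ω, ?_⟩
    have := CliffordAlgebra.contractLeft_ι_mul (Q := (0 : QuadraticForm R M))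
      (d := b.coord i₀) (b i₀) ω
    rw [show CliffordAlgebra.ι (0 : QuadraticForm R M) = ExteriorAlgebra.ι R from rfl,
      h, map_zero, Module.Basis.coord_apply, Module.Basis.repr_self, Finsupp.single_eq_same, one_smul] at this
    have := this.symm
    linear_combination (norm := module) this
  · rintro ⟨η, rfl⟩
    rw [← mul_assoc, ExteriorAlgebra.ι_sq_zero, zero_mul]
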